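/- Gilbert's recursion for random graph connectivity: let g(n, ε) be the probability that the Erdős–Rényi random graph G(n, ε) (each edge present independently with probability ε) is disconnected, for n ≥ 1 with g(1, ε) = 0. Then 1 − g(n, ε) = 1 − Σ_{i=1}^{n−1} C(n−1, i−1) · (1 − g(i, ε)) · (1−ε)^{i(n−i)}, i.e., the probability that the component containing a fixed vertex has size i and is internally arbitrary but isolated from the remaining n−i vertices sums correctly over i. -/

import Mathlib

open MeasureTheory ENNReal

noncomputable section

/-- Potential edges of a graph on `Fin n`: non-diagonal unordered pairs. -/
def EdgeSlots (n : ℕ) : Type := {e : Sym2 (Fin n) // ¬ e.IsDiag}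

instance (n : ℕ) : Fintype (EdgeSlots n) := by unfold EdgeSlots; infer_instance

/-- The graph determined by a choice of present edges. -/
def graphOf {n : ℕ} (ω : EdgeSlots n → Bool) : SimpleGraph (Fin n) where
  Adj i j := ∃ h : i ≠ j, ω ⟨s(i, j), by simpa using h⟩ = true
  symm := by
    constructor
    rintro i j ⟨h, hw⟩
    refine ⟨h.symm, ?_⟩
    have : (⟨s(j, i), by simpa using h.symm⟩ : EdgeSlots n)
        = ⟨s(i, j), by simpa using h⟩ := Subtype.ext (Sym2.eq_swap)
    rw [this]; exact hw
  loopless := by constructor; rintro i ⟨h, _⟩; exact h rfl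

/-- The Erdős–Rényi measure `G(n, ε)`: each potential edge present
independently with probability ε. -/
def gnp (n : ℕ) (ε : ℝ≥0∞) (hε : ε ≤ 1) : Measure (EdgeSlots n → Bool) :=
  Measure.pi fun _ => (PMF.ofFintype (fun b => cond b ε (1 - ε)) (by simp [hε])).toMeasure

/-- Probability that `G(n, ε)` is disconnected. -/
def disconnProb (n : ℕ) (ε : ℝ≥0∞) (hε : ε ≤ 1) : ℝ≥0∞ :=
  gnp n ε hε {ω | ¬ (graphOf ω).Connected}

namespace Gilbert
open Finset

lemma measAll {ι : Type*} [Fintype ι] (s : Set (ι → Bool)) : MeasurableSet s := by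
  haveI : MeasurableSingletonClass (ι → Bool) := ⟨fun f => by
    have h : ({f} : Set (ι → Bool)) = Set.pi Set.univ fun i => {f i} := by
      ext g; simp [Set.mem_pi, funext_iff]
    rw [h]
    exact MeasurableSet.univ_pi fun i => measurableSet_singleton _⟩
  exact (Set.toFinite s).measurableSet

lemma prob_split {ι : Type*} [Fintype ι] (μ0 : Measure Bool) [IsProbabilityMeasure μ0]
    (p : ι → Prop) [DecidablePred p]
    (E : Set ({i // p i} → Bool)) (F : Set ({i // ¬ p i} → Bool)) :
    Measure.pi (fun _ : ι => μ0)
      ({ω | (fun i : {i // p i} => ω i.1) ∈ E} ∩ {ω | (fun i : {i // ¬ p i} => ω i.1) ∈ F})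
      = Measure.pi (fun _ : {i // p i} => μ0) E * Measure.pi (fun _ : {i // ¬ p i} => μ0) F := by
  have h := measurePreserving_piEquivPiSubtypeProd (fun _ : ι => μ0) p
  have hpre : (MeasurableEquiv.piEquivPiSubtypeProd (fun _ : ι => Bool) p) ⁻¹' (E ×ˢ F)
      = {ω | (fun i : {i // p i} => ω i.1) ∈ E} ∩ {ω | (fun i : {i // ¬ p i} => ω i.1) ∈ F} := by
    ext ω
    simp [MeasurableEquiv.piEquivPiSubtypeProd, Equiv.piEquivPiSubtypeProd, Set.mem_prod]
  rw [← Measure.prod_prod, ← h.measure_preimage ((measAll E).prod (measAll F)).nullMeasurableSet,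
    hpre]

lemma prob_marginal {ι : Type*} [Fintype ι] (μ0 : Measure Bool) [IsProbabilityMeasure μ0]
    (p : ι → Prop) [DecidablePred p] (E : Set ({i // p i} → Bool)) :
    Measure.pi (fun _ : ι => μ0) {ω | (fun i : {i // p i} => ω i.1) ∈ E}
      = Measure.pi (fun _ : {i // p i} => μ0) E := by
  have h := prob_split μ0 p E Set.univ
  simpa using h

lemma bern_false (ε : ℝ≥0∞) (hε : ε ≤ 1) :
    (PMF.ofFintype (fun b => cond b ε (1 - ε)) (by simp [hε])).toMeasure {false} = 1 - ε := by
  rw [PMF.toMeasure_apply_singleton _ _ (measurableSet_singleton _)]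
  rfl

variable {n : ℕ}
def slotVal {n : ℕ} (e : EdgeSlots n) : Sym2 (Fin n) := e.1
def withinP (S : Finset (Fin n)) (e : EdgeSlots n) : Prop := ∀ v ∈ slotVal e, v ∈ S
def crossP (S : Finset (Fin n)) (e : EdgeSlots n) : Prop :=
  ∃ a b, slotVal e = s(a, b) ∧ a ∈ S ∧ b ∉ S

lemma cross_not_within {S : Finset (Fin n)} {e : EdgeSlots n} (h : crossP S e) :
    ¬ withinP S e := by
  obtain ⟨a, b, he, -, hb⟩ := h
  intro hw
  exact hb (hw b (by rw [slotVal] at he ⊢; rw [he]; exact Sym2.mem_mk_right a b))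

variable (S : Finset (Fin n)) (φ : Fin S.card ≃ {x // x ∈ S})

lemma phi_inj : Function.Injective (fun a : Fin S.card => (φ a : Fin n)) :=
  fun a b h => φ.injective (Subtype.ext h)

/-- Map a small edge slot to a big one. -/
def emb (e : EdgeSlots S.card) : EdgeSlots n :=
  ⟨Sym2.map (fun a => (φ a : Fin n)) e.1, by
    rw [Sym2.isDiag_map (phi_inj S φ)]; exact e.2⟩

lemma emb_val (e : EdgeSlots S.card) :
    (emb S φ e).1 = Sym2.map (fun a => (φ a : Fin n)) e.1 := rfl

lemma within_emb (e : EdgeSlots S.card) : withinP S (emb S φ e) := by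
  intro v hv
  rw [slotVal, emb_val] at hv
  obtain ⟨a, _, rfl⟩ := Sym2.mem_map.mp hv
  exact (φ a).2

lemma emb_inj : Function.Injective (emb S φ) := by
  intro e₁ e₂ h
  exact Subtype.ext (Sym2.map.injective (phi_inj S φ) (congrArg Subtype.val h))

lemma emb_surj {e : EdgeSlots n} (he : withinP S e) :
    ∃ e', emb S φ e' = e := by
  obtain ⟨z, hz⟩ : ∃ z : Sym2 (Fin n), z = e.1 := ⟨e.1, rfl⟩
  induction z using Sym2.ind with
  | _ a b =>
    have ha : a ∈ S := he a (by rw [slotVal, ← hz]; exact Sym2.mem_mk_left a b)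
    have hb : b ∈ S := he b (by rw [slotVal, ← hz]; exact Sym2.mem_mk_right a b)
    have hab : a ≠ b := by
      intro h; apply e.2; rw [← hz, h]; exact Sym2.mk_isDiag_iff.mpr rfl
    refine ⟨⟨s(φ.symm ⟨a, ha⟩, φ.symm ⟨b, hb⟩), ?_⟩, ?_⟩
    · rw [Sym2.mk_isDiag_iff]
      intro h
      exact hab (congrArg Subtype.val (φ.symm.injective h : (⟨a, ha⟩ : {x // x ∈ S}) = ⟨b, hb⟩))
    · apply Subtype.ext
      show Sym2.map (fun a => (φ a : Fin n)) s(φ.symm ⟨a, ha⟩, φ.symm ⟨b, hb⟩) = e.1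
      rw [Sym2.map_pair_eq, ← hz]
      simp

/-- The equivalence between small slots and within-`S` slots. -/
def kappa : EdgeSlots S.card ≃ {e : EdgeSlots n // withinP S e} :=
  Equiv.ofBijective (fun e => ⟨emb S φ e, within_emb S φ e⟩)
    ⟨fun a b h => emb_inj S φ (congrArg Subtype.val h),
     fun e => by obtain ⟨e', he'⟩ := emb_surj S φ e.2; exact ⟨e', Subtype.ext he'⟩⟩

lemma adj_iff (ω : EdgeSlots n → Bool) (a b : Fin S.card) :
    (graphOf (fun e' => ω (emb S φ e'))).Adj a b ↔ (graphOf ω).Adj (φ a) (φ b) := by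
  constructor
  · rintro ⟨h, hw⟩
    refine ⟨fun hh => h (φ.injective (Subtype.ext hh)), ?_⟩
    have : emb S φ ⟨s(a, b), by simpa using h⟩
        = ⟨s((φ a : Fin n), (φ b : Fin n)), by
            simpa using fun hh => h (φ.injective (Subtype.ext hh))⟩ := by
      apply Subtype.ext
      show Sym2.map (fun a => (φ a : Fin n)) s(a, b) = _
      rw [Sym2.map_pair_eq]
    rw [← this]; exact hw
  · rintro ⟨h, hw⟩
    have hab : a ≠ b := fun hh => h (by rw [hh])
    refine ⟨hab, ?_⟩
    have : emb S φ ⟨s(a, b), by simpa using hab⟩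
        = ⟨s((φ a : Fin n), (φ b : Fin n)), by simpa using h⟩ := by
      apply Subtype.ext
      show Sym2.map (fun a => (φ a : Fin n)) s(a, b) = _
      rw [Sym2.map_pair_eq]
    show ω (emb S φ _) = true
    rw [this]; exact hw

def psi (v : Fin n) (hv : v ∈ S) : Fin S.card := φ.symm ⟨v, hv⟩

lemma adj_small {ω : EdgeSlots n → Bool} {u x : Fin n} (hu : u ∈ S) (hx : x ∈ S)
    (h : (graphOf ω).Adj u x) :
    (graphOf (fun e' => ω (emb S φ e'))).Adj (psi S φ u hu) (psi S φ x hx) := by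
  rw [adj_iff]
  simpa [psi] using h

lemma comp_iff (v0 : Fin n) (hv0 : v0 ∈ S) (ω : EdgeSlots n → Bool) :
    (∀ v, (graphOf ω).Reachable v0 v ↔ v ∈ S)
    ↔ ((∀ e, crossP S e → ω e = false)
        ∧ (graphOf (fun e' => ω (emb S φ e'))).Connected) := by
  set G' := graphOf (fun e' => ω (emb S φ e')) with hG'
  constructor
  · intro hS
    constructor
    · rintro e ⟨a, b, he, haS, hbS⟩
      by_contra hne
      have hωe : ω e = true := by
        cases h : ω e
        · exact absurd h hne
        · rfl
      have hab : a ≠ b := by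
        intro h; apply e.2; rw [show e.1 = s(a,b) from he, h]
        exact Sym2.mk_isDiag_iff.mpr rfl
      have hadj : (graphOf ω).Adj a b := by
        refine ⟨hab, ?_⟩
        have : e = ⟨s(a, b), by simpa using hab⟩ := Subtype.ext he
        rw [← this]; exact hωe
      exact hbS ((hS b).mp (((hS a).mpr haS).trans hadj.reachable))
    · rw [SimpleGraph.connected_iff_exists_forall_reachable]
      refine ⟨psi S φ v0 hv0, fun w => ?_⟩
      have key : ∀ u v : Fin n, (graphOf ω).Walk u v →
          (graphOf ω).Reachable v0 u →
          ∀ (hu : u ∈ S) (hv : v ∈ S), G'.Reachable (psi S φ u hu) (psi S φ v hv) := by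
        intro u v w
        induction w with
        | nil => intro _ _ _; exact SimpleGraph.Reachable.refl _
        | cons h p ih =>
          rename_i a c d  -- vertices: walk from a via adj a c, p : Walk c d
          intro hra hu hv
          have hrc : (graphOf ω).Reachable v0 c := hra.trans h.reachable
          have hc : c ∈ S := (hS c).mp hrc
          exact ((adj_small S φ hu hc h).reachable).trans (ih hrc hc hv)
      have hw : (φ w : Fin n) ∈ S := (φ w).2
      obtain ⟨p⟩ := (hS (φ w)).mpr hw
      have := key v0 (φ w) p (SimpleGraph.Reachable.refl _) hv0 hw
      have hpsiw : psi S φ (φ w : Fin n) hw = w := by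
        simp [psi]
      rwa [hpsiw] at this
  · rintro ⟨hcross, hconn⟩ v
    constructor
    · intro hr
      obtain ⟨p⟩ := hr
      have key : ∀ u v : Fin n, (graphOf ω).Walk u v → u ∈ S → v ∈ S := by
        intro u v w
        induction w with
        | nil => exact id
        | cons h p ih =>
          rename_i a c d
          intro ha
          apply ih
          by_contra hc
          obtain ⟨hne, hω⟩ := h
          have := hcross ⟨s(a, c), by simpa using hne⟩ ⟨a, c, rfl, ha, hc⟩
          rw [this] at hω
          exact Bool.false_ne_true hω
      exact key v0 v p hv0
    · intro hv
      have hr : G'.Reachable (psi S φ v0 hv0) (psi S φ v hv) := hconn.preconnected _ _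
      have := hr.map (⟨fun a => (φ a : Fin n), fun {a b} h => (adj_iff S φ ω a b).mp h⟩ :
        G' →g graphOf ω)
      have h2 : (graphOf ω).Reachable (φ (φ.symm ⟨v0, hv0⟩) : Fin n)
          (φ (φ.symm ⟨v, hv⟩) : Fin n) := this
      simpa using h2

section Counting
open scoped Classical
variable {n : ℕ}

lemma card_cross (S : Finset (Fin n)) :
    Fintype.card {e : EdgeSlots n // crossP S e} = S.card * (n - S.card) := by
  classical
  rw [Fintype.card_subtype]
  have h : (S ×ˢ Sᶜ).card = (univ.filter (crossP S)).card := by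
    apply Finset.card_bij (β := EdgeSlots n)
      (fun p hp => (⟨s(p.1, p.2), by
        simp only [Finset.mem_product, Finset.mem_compl] at hp
        rw [Sym2.mk_isDiag_iff]
        intro hh
        exact hp.2 (hh ▸ hp.1)⟩ : EdgeSlots n))
    · intro p hp
      simp only [Finset.mem_product, Finset.mem_compl] at hp
      exact Finset.mem_filter.mpr ⟨Finset.mem_univ _, p.1, p.2, rfl, hp.1, hp.2⟩
    · intro p hp q hq hqe
      simp only [Finset.mem_product, Finset.mem_compl] at hp hq
      have h2 : s(p.1, p.2) = s(q.1, q.2) := congrArg Subtype.val hqe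
      rw [Sym2.eq_iff] at h2
      rcases h2 with ⟨h1, h3⟩ | ⟨h1, h3⟩
      · exact Prod.ext h1 h3
      · exact absurd (h1 ▸ hp.1) hq.2
    · rintro e he
      simp only [Finset.mem_filter, Finset.mem_univ, true_and] at he
      obtain ⟨a, b, hab, ha, hb⟩ := he
      have hmem : (a, b) ∈ S ×ˢ Sᶜ := by
        simp [Finset.mem_product, Finset.mem_compl, ha, hb]
      exact ⟨(a, b), hmem, Subtype.ext hab.symm⟩
  rw [← h, Finset.card_product, Finset.card_compl, Fintype.card_fin]

lemma card_cross_sub (S : Finset (Fin n)) :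
    (univ.filter fun e : {e : EdgeSlots n // ¬ withinP S e} => crossP S e.1).card
      = S.card * (n - S.card) := by
  rw [← Fintype.card_subtype,
    Fintype.card_congr (Equiv.subtypeSubtypeEquivSubtype fun {e} h => cross_not_within h)]
  exact card_cross S

end Counting

section MeasureParts
open scoped Classical
variable {n : ℕ} (ε : ℝ≥0∞) (hε : ε ≤ 1)

lemma measure_B (S : Finset (Fin n)) :
    Measure.pi (fun _ : {e : EdgeSlots n // ¬ withinP S e} => (PMF.ofFintype (fun b => cond b ε (1 - ε)) (by simp [hε])).toMeasure)
      {ω' | ∀ e, crossP S e.1 → ω' e = false} = (1 - ε) ^ (S.card * (n - S.card)) := by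
  have hset : {ω' : {e : EdgeSlots n // ¬ withinP S e} → Bool | ∀ e, crossP S e.1 → ω' e = false}
      = Set.pi Set.univ (fun e => if crossP S e.1 then {false} else Set.univ) := by
    ext ω'
    simp only [Set.mem_pi, Set.mem_univ, forall_true_left, Set.mem_setOf_eq]
    constructor
    · intro h e
      split_ifs with hc
      · exact h e hc
      · trivial
    · intro h e hc
      have := h e
      rwa [if_pos hc] at this
  rw [hset, Measure.pi_pi]
  have hterm : ∀ e : {e : EdgeSlots n // ¬ withinP S e},
      (PMF.ofFintype (fun b => cond b ε (1 - ε)) (by simp [hε])).toMeasure (if crossP S e.1 then {false} else Set.univ)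
        = if crossP S e.1 then (1 - ε) else 1 := by
    intro e
    split_ifs
    · exact bern_false ε hε
    · exact measure_univ
  rw [Finset.prod_congr rfl fun e _ => hterm e, Finset.prod_ite, Finset.prod_const,
    Finset.prod_const_one, mul_one, card_cross_sub]

lemma measure_C (S : Finset (Fin n)) (φ : Fin S.card ≃ {x // x ∈ S}) :
    Measure.pi (fun _ : {e : EdgeSlots n // withinP S e} => (PMF.ofFintype (fun b => cond b ε (1 - ε)) (by simp [hε])).toMeasure)
      {ω' | (graphOf (fun e' => ω' ⟨emb S φ e', within_emb S φ e'⟩)).Connected}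
      = 1 - disconnProb S.card ε hε := by
  have h := measurePreserving_piCongrLeft
    (fun _ : {e : EdgeSlots n // withinP S e} => (PMF.ofFintype (fun b => cond b ε (1 - ε)) (by simp [hε])).toMeasure) (kappa S φ)
  rw [← h.measure_preimage (measAll _).nullMeasurableSet]
  have hpre : (MeasurableEquiv.piCongrLeft (fun _ => Bool) (kappa S φ)) ⁻¹'
        {ω' | (graphOf (fun e' => ω' ⟨emb S φ e', within_emb S φ e'⟩)).Connected}
      = {g : EdgeSlots S.card → Bool | (graphOf g).Connected} := by
    ext g
    simp only [Set.mem_preimage, Set.mem_setOf_eq, MeasurableEquiv.coe_piCongrLeft]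
    have hfun : (fun e' => (Equiv.piCongrLeft (fun _ => Bool) (kappa S φ)) g
        ⟨emb S φ e', within_emb S φ e'⟩) = g := by
      funext e'
      exact Equiv.piCongrLeft_apply_apply (fun _ => Bool) (kappa S φ) g e'
    rw [hfun]
  rw [hpre]
  have hcompl : {g : EdgeSlots S.card → Bool | (graphOf g).Connected}
      = {g : EdgeSlots S.card → Bool | ¬ (graphOf g).Connected}ᶜ := by
    ext g; simp
  haveI : IsProbabilityMeasure (gnp S.card ε hε) := by
    unfold gnp; infer_instance
  have : Measure.pi (fun _ : EdgeSlots S.card => (PMF.ofFintype (fun b => cond b ε (1 - ε)) (by simp [hε])).toMeasure)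
      = gnp S.card ε hε := rfl
  rw [hcompl, this, prob_compl_eq_one_sub (measAll _)]
  rfl

lemma measure_A (S : Finset (Fin n)) (v0 : Fin n) (hv0 : v0 ∈ S) :
    gnp n ε hε {ω | ∀ v, (graphOf ω).Reachable v0 v ↔ v ∈ S}
      = (1 - disconnProb S.card ε hε) * (1 - ε) ^ (S.card * (n - S.card)) := by
  set φ : Fin S.card ≃ {x // x ∈ S} := S.equivFin.symm with hφ
  have hset : {ω : EdgeSlots n → Bool | ∀ v, (graphOf ω).Reachable v0 v ↔ v ∈ S}
      = ({ω | (fun e : {e // withinP S e} => ω e.1) ∈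
            {ω' | (graphOf (fun e' => ω' ⟨emb S φ e', within_emb S φ e'⟩)).Connected}}
        ∩ {ω | (fun e : {e // ¬ withinP S e} => ω e.1) ∈
            {ω' | ∀ e, crossP S e.1 → ω' e = false}}) := by
    ext ω
    rw [Set.mem_setOf_eq, comp_iff S φ v0 hv0 ω]
    constructor
    · rintro ⟨hcr, hco⟩
      exact ⟨hco, fun e hc => hcr e.1 hc⟩
    · rintro ⟨hco, hcr⟩
      exact ⟨fun e hc => hcr ⟨e, cross_not_within hc⟩ hc, hco⟩
  rw [hset]
  have := prob_split ((PMF.ofFintype (fun b => cond b ε (1 - ε)) (by simp [hε])).toMeasure) (withinP S)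
    {ω' | (graphOf (fun e' => ω' ⟨emb S φ e', within_emb S φ e'⟩)).Connected}
    {ω' | ∀ e, crossP S e.1 → ω' e = false}
  rw [show gnp n ε hε = Measure.pi fun _ : EdgeSlots n => (PMF.ofFintype (fun b => cond b ε (1 - ε)) (by simp [hε])).toMeasure from rfl,
    this, measure_C ε hε S φ, measure_B ε hε S]

end MeasureParts

section Main
open scoped Classical
variable {n : ℕ} (ε : ℝ≥0∞) (hε : ε ≤ 1)

lemma conn_iff (ω : EdgeSlots n → Bool) (v0 : Fin n) :
    (graphOf ω).Connected ↔ ∀ v, (graphOf ω).Reachable v0 v := by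
  constructor
  · intro h v
    exact h.preconnected v0 v
  · intro h
    rw [SimpleGraph.connected_iff_exists_forall_reachable]
    exact ⟨v0, h⟩

lemma disconn_decomp (v0 : Fin n) :
    disconnProb n ε hε
      = ∑ S ∈ (univ : Finset (Finset (Fin n))).filter
            (fun S => v0 ∈ S ∧ S ≠ univ),
          gnp n ε hε {ω | ∀ v, (graphOf ω).Reachable v0 v ↔ v ∈ S} := by
  rw [disconnProb]
  have hU : {ω : EdgeSlots n → Bool | ¬ (graphOf ω).Connected}
      = ⋃ S ∈ ((univ : Finset (Finset (Fin n))).filter fun S => v0 ∈ S ∧ S ≠ univ),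
          {ω | ∀ v, (graphOf ω).Reachable v0 v ↔ v ∈ S} := by
    ext ω
    simp only [Set.mem_setOf_eq, Set.mem_iUnion, Finset.mem_filter, Finset.mem_univ, true_and,
      Finset.mem_coe]
    constructor
    · intro h
      refine ⟨univ.filter fun v => (graphOf ω).Reachable v0 v, ⟨?_, ?_⟩, ?_⟩
      · exact Finset.mem_filter.mpr ⟨Finset.mem_univ _, SimpleGraph.Reachable.refl _⟩
      · intro hEq
        apply h
        rw [conn_iff ω v0]
        intro v
        have hv := Finset.mem_univ v
        rw [← hEq] at hv
        simpa using hv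
      · intro v; simp
    · rintro ⟨S, ⟨hv0, hne⟩, hS⟩ hconn
      apply hne
      apply Finset.eq_univ_iff_forall.mpr
      intro v
      exact (hS v).mp ((conn_iff ω v0).mp hconn v)
  rw [hU, measure_biUnion_finset ?disj fun S _ => measAll _]
  case disj =>
    intro S hS T hT hST
    simp only [Function.onFun]
    rw [Set.disjoint_left]
    intro ω hω1 hω2
    apply hST
    ext v
    exact ((hω1 v).symm.trans (hω2 v))

lemma count_subsets (v0 : Fin n) {i : ℕ} (hi1 : 1 ≤ i) (hi2 : i ≤ n - 1) (hn : 1 ≤ n) :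
    ((univ : Finset (Finset (Fin n))).filter
        (fun S => (v0 ∈ S ∧ S ≠ univ) ∧ S.card = i)).card
      = (n - 1).choose (i - 1) := by
  have hpow : ((univ.erase v0).powersetCard (i - 1)).card = (n - 1).choose (i - 1) := by
    rw [Finset.card_powersetCard, Finset.card_erase_of_mem (Finset.mem_univ v0),
      Finset.card_univ, Fintype.card_fin]
  rw [← hpow]
  refine Finset.card_bij' (fun S _ => S.erase v0) (fun T _ => insert v0 T) ?hi ?hj ?li ?ri
  case hi =>
    intro S hS
    simp only [Finset.mem_filter, Finset.mem_univ, true_and] at hS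
    rw [Finset.mem_powersetCard]
    exact ⟨Finset.erase_subset_erase v0 (Finset.subset_univ S),
      by rw [Finset.card_erase_of_mem hS.1.1, hS.2]⟩
  case hj =>
    intro T hT
    rw [Finset.mem_powersetCard] at hT
    have hv0T : v0 ∉ T := fun h => (Finset.mem_erase.mp (hT.1 h)).1 rfl
    simp only [Finset.mem_filter, Finset.mem_univ, true_and]
    refine ⟨⟨Finset.mem_insert_self v0 T, ?_⟩, ?_⟩
    · intro hEq
      have hcard := congrArg Finset.card hEq
      rw [Finset.card_insert_of_notMem hv0T, hT.2, Finset.card_univ, Fintype.card_fin] at hcard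
      omega
    · rw [Finset.card_insert_of_notMem hv0T, hT.2]
      omega
  case li =>
    intro S hS
    simp only [Finset.mem_filter, Finset.mem_univ, true_and] at hS
    exact Finset.insert_erase hS.1.1
  case ri =>
    intro T hT
    rw [Finset.mem_powersetCard] at hT
    have hv0T : v0 ∉ T := fun h => (Finset.mem_erase.mp (hT.1 h)).1 rfl
    exact Finset.erase_insert hv0T

theorem main (hn : 1 ≤ n) :
    disconnProb n ε hε
      = ∑ i ∈ Finset.Icc 1 (n - 1),
          ((n - 1).choose (i - 1) : ℝ≥0∞) * (1 - disconnProb i ε hε)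
            * (1 - ε) ^ (i * (n - i)) := by
  set v0 : Fin n := ⟨0, hn⟩
  rw [disconn_decomp ε hε v0]
  set TT := (univ : Finset (Finset (Fin n))).filter fun S => v0 ∈ S ∧ S ≠ univ with hTT
  have hmaps : ∀ S ∈ TT, S.card ∈ Finset.Icc 1 (n - 1) := by
    intro S hS
    simp only [hTT, Finset.mem_filter, Finset.mem_univ, true_and] at hS
    rw [Finset.mem_Icc]
    refine ⟨Finset.card_pos.mpr ⟨v0, hS.1⟩, ?_⟩
    have hlt : S.card < n := by
      have h1 := Finset.card_lt_card (Finset.ssubset_univ_iff.mpr hS.2)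
      rwa [Finset.card_univ, Fintype.card_fin] at h1
    omega
  have hstep : ∀ S ∈ TT, gnp n ε hε {ω | ∀ v, (graphOf ω).Reachable v0 v ↔ v ∈ S}
      = (1 - disconnProb S.card ε hε) * (1 - ε) ^ (S.card * (n - S.card)) := by
    intro S hS
    simp only [hTT, Finset.mem_filter, Finset.mem_univ, true_and] at hS
    exact measure_A ε hε S v0 hS.1
  rw [Finset.sum_congr rfl hstep,
    ← Finset.sum_fiberwise_of_maps_to' hmaps
      (fun i => (1 - disconnProb i ε hε) * (1 - ε) ^ (i * (n - i)))]
  apply Finset.sum_congr rfl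
  intro i hi
  rw [Finset.mem_Icc] at hi
  rw [Finset.sum_const]
  have hcount : (TT.filter fun S => S.card = i).card = (n - 1).choose (i - 1) := by
    rw [hTT, Finset.filter_filter]
    exact count_subsets v0 hi.1 hi.2 hn
  rw [hcount, nsmul_eq_mul, mul_assoc]

end Main
end Gilbert

/-- Gilbert's recursion for the connectivity probability of `G(n, ε)`. -/
theorem stmt11 (ε : ℝ≥0∞) (hε : ε ≤ 1) (n : ℕ) (hn : 1 ≤ n) :
    1 - disconnProb n ε hε
      = 1 - ∑ i ∈ Finset.Icc 1 (n - 1),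
          ((n - 1).choose (i - 1) : ℝ≥0∞) * (1 - disconnProb i ε hε)
            * (1 - ε) ^ (i * (n - i)) := by
  rw [Gilbert.main ε hε hn]

end
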